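/- arXiv:2404.10151 — 3 statements merged into one kernel-verified Lean document; each statement's English description precedes it below -/
import Mathlib

section
/- Adjacency–timestamp dichotomy (paper's Lemma on links A→B): Suppose that in the final list L k the element b immediately follows the element a, with b ≥ 1. Then exactly one of the following holds: (1) b > a, in which case a is an ancestor of b (b was inserted at a or at a descendant of a); or (2) b < a, in which case b was inserted before a and the parent p b of b occurs strictly before a in L k. -/
/-- Insert `x` immediately after the (first) occurrence of `a` in the list. -/
def insertAfter (a x : ℕ) : List ℕ → List ℕ
  | [] => []
  | b :: t => if b = a then b :: x :: t else b :: insertAfter a x t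

/-- The sequential construction: `L 0 = [0]`, `L (i+1) = insertAfter (p (i+1)) (i+1) (L i)`. -/
def buildL (p : ℕ → ℕ) : ℕ → List ℕ
  | 0 => [0]
  | i + 1 => insertAfter (p (i + 1)) (i + 1) (buildL p i)

/-- Insert `x` into a list by timestamp: skip all elements greater than `x`,
and insert `x` before the first element smaller (or equal), or at the end. -/
def insertByTS (x : ℕ) : List ℕ → List ℕ
  | [] => [x]
  | b :: t => if x < b then b :: insertByTS x t else x :: b :: t

/-- The timestamp-guided replay insertion: scan right from the occurrence of `a`,
skip all elements with timestamp greater than `x`, and insert `x` before the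
first element with smaller timestamp (or at the end). -/
def replayInsert (a x : ℕ) : List ℕ → List ℕ
  | [] => []
  | b :: t => if b = a then b :: insertByTS x t else b :: replayInsert a x t

/-- `buildSet p S` performs the insertion events of `S` in increasing order of
timestamp, starting from `[0]`. -/
def buildSet (p : ℕ → ℕ) (S : Finset ℕ) : List ℕ :=
  (S.sort (· ≤ ·)).foldl (fun M i => insertAfter (p i) i M) [0]

/-- `i` is an ancestor of `j` (equivalently `j` a descendant of `i`): iterating the
parent map `p` (extended by `p 0 = 0`) starting from `j` reaches `i`. -/
def isAncestor (p : ℕ → ℕ) (i j : ℕ) : Prop :=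
  ∃ n : ℕ, (fun m => if m = 0 then 0 else p m)^[n] j = i

open List

lemma insertAfter_cons_eq {q x c : ℕ} (t : List ℕ) (h : c = q) :
    insertAfter q x (c :: t) = c :: x :: t := by simp [insertAfter, h]

lemma insertAfter_cons_ne {q x c : ℕ} (t : List ℕ) (h : ¬ c = q) :
    insertAfter q x (c :: t) = c :: insertAfter q x t := by simp [insertAfter, h]

lemma sublist_insertAfter (q x : ℕ) (l : List ℕ) : l <+ insertAfter q x l := by
  induction l with
  | nil => simp [insertAfter]
  | cons c t ih =>
    by_cases h : c = q
    · rw [insertAfter_cons_eq t h]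
      exact (List.sublist_cons_self x t).cons₂ c
    · rw [insertAfter_cons_ne t h]
      exact ih.cons₂ c

lemma mem_of_mem_insertAfter {q x y : ℕ} {l : List ℕ}
    (h : y ∈ insertAfter q x l) : y = x ∨ y ∈ l := by
  induction l with
  | nil => simp [insertAfter] at h
  | cons c t ih =>
    by_cases hc : c = q
    · rw [insertAfter_cons_eq t hc] at h
      rcases List.mem_cons.mp h with h | h
      · right; simp [h]
      · rcases List.mem_cons.mp h with h | h
        · left; exact h
        · right; exact List.mem_cons_of_mem c h
    · rw [insertAfter_cons_ne t hc] at h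
      rcases List.mem_cons.mp h with h | h
      · right; simp [h]
      · rcases ih h with h | h
        · left; exact h
        · right; exact List.mem_cons_of_mem c h

lemma mem_insertAfter_self {q x : ℕ} {l : List ℕ} (h : q ∈ l) :
    x ∈ insertAfter q x l := by
  induction l with
  | nil => simp at h
  | cons c t ih =>
    by_cases hc : c = q
    · rw [insertAfter_cons_eq t hc]; simp
    · rw [insertAfter_cons_ne t hc]
      rcases List.mem_cons.mp h with h | h
      · exact absurd h.symm hc
      · exact List.mem_cons_of_mem c (ih h)

lemma nodup_insertAfter {q x : ℕ} {l : List ℕ} (hn : l.Nodup) (hx : x ∉ l) :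
    (insertAfter q x l).Nodup := by
  induction l with
  | nil => simp [insertAfter]
  | cons c t ih =>
    rcases List.nodup_cons.mp hn with ⟨hct, hnt⟩
    by_cases hc : c = q
    · rw [insertAfter_cons_eq t hc]
      refine List.nodup_cons.mpr ⟨?_, List.nodup_cons.mpr ⟨?_, hnt⟩⟩
      · simp only [List.mem_cons, not_or]
        exact ⟨fun h => hx (h ▸ List.mem_cons_self), hct⟩
      · intro h; exact hx (List.mem_cons_of_mem c h)
    · rw [insertAfter_cons_ne t hc]
      refine List.nodup_cons.mpr ⟨?_, ih hnt (fun h => hx (List.mem_cons_of_mem c h))⟩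
      intro h
      rcases mem_of_mem_insertAfter h with h | h
      · exact hx (h ▸ List.mem_cons_self)
      · exact hct h

lemma insertAfter_split {q x : ℕ} {u z : List ℕ} (hu : q ∉ u) :
    insertAfter q x (u ++ q :: z) = u ++ q :: x :: z := by
  induction u with
  | nil => simp [insertAfter]
  | cons c t ih =>
    simp only [List.mem_cons, not_or] at hu
    rw [List.cons_append, insertAfter_cons_ne _ (fun h => hu.1 h.symm), ih hu.2,
      List.cons_append]

lemma pair_sublist_of_mem {x y : ℕ} {l₁ l₂ : List ℕ} (h : x ∈ l₁) :
    [x, y] <+ l₁ ++ y :: l₂ := by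
  have h1 : [x] <+ l₁ := List.singleton_sublist.mpr h
  have h2 : [y] <+ y :: l₂ := List.singleton_sublist.mpr (List.mem_cons_self)
  exact h1.append h2

lemma mem_of_pair_sublist {x y : ℕ} {l₁ l₂ : List ℕ}
    (h : [x, y] <+ l₁ ++ y :: l₂) (h1 : y ∉ l₁) (h2 : y ∉ l₂) : x ∈ l₁ := by
  induction l₁ with
  | nil =>
    simp only [List.nil_append] at h
    cases h with
    | cons _ h' => exact absurd (h'.subset (by simp)) h2
    | cons_cons _ h' => exact absurd (h'.subset (by simp)) h2
  | cons c t ih =>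
    rw [List.cons_append] at h
    cases h with
    | cons _ h' =>
      simp only [List.mem_cons, not_or] at h1
      exact List.mem_cons_of_mem c (ih h' h1.2)
    | cons_cons _ h' => exact List.mem_cons_self

lemma indexOf_lt_of_pair_sublist {x y : ℕ} {l : List ℕ}
    (hn : l.Nodup) (h : [x, y] <+ l) : l.idxOf x < l.idxOf y := by
  induction l with
  | nil => cases h
  | cons c t ih =>
    rcases List.nodup_cons.mp hn with ⟨hct, hnt⟩
    cases h with
    | cons _ h' =>
      have hx : x ∈ t := h'.subset (by simp)
      have hy : y ∈ t := h'.subset (by simp)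
      have hxc : c ≠ x := fun e => hct (e ▸ hx)
      have hyc : c ≠ y := fun e => hct (e ▸ hy)
      rw [List.idxOf_cons_ne _ hxc, List.idxOf_cons_ne _ hyc]
      exact Nat.succ_lt_succ (ih hnt h')
    | cons_cons _ h' =>
      have hy : y ∈ t := h'.subset (by simp)
      have hyc : x ≠ y := fun e => hct (e.symm ▸ hy)
      rw [List.idxOf_cons_self, List.idxOf_cons_ne _ hyc]
      exact Nat.succ_pos _

lemma insertAfter_adj {q x a b : ℕ} : ∀ {M u v : List ℕ},
    insertAfter q x M = u ++ a :: b :: v →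
    (a = q ∧ b = x) ∨ (a = x ∧ ∃ u' v', M = u' ++ q :: b :: v') ∨
      (∃ u' v', M = u' ++ a :: b :: v') := by
  intro M
  induction M with
  | nil =>
    intro u v h
    simp only [insertAfter] at h
    exact absurd (congrArg List.length h) (by simp)
  | cons c t ih =>
    intro u v h
    by_cases hc : c = q
    · rw [insertAfter_cons_eq t hc] at h
      match u, h with
      | [], h =>
        simp only [List.nil_append, List.cons.injEq] at h
        exact Or.inl ⟨h.1.symm.trans hc, h.2.1.symm⟩
      | [d], h =>
        simp only [List.cons_append, List.nil_append, List.cons.injEq] at h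
        refine Or.inr (Or.inl ⟨h.2.1.symm, [], v, ?_⟩)
        rw [List.nil_append, h.2.2, ← hc]
      | d :: e :: u₂, h =>
        simp only [List.cons_append, List.cons.injEq] at h
        refine Or.inr (Or.inr ⟨c :: u₂, v, ?_⟩)
        rw [h.2.2]; simp
    · rw [insertAfter_cons_ne t hc] at h
      match u, h with
      | [], h =>
        simp only [List.nil_append, List.cons.injEq] at h
        -- h : c = a ∧ insertAfter q x t = b :: v
        match t, h.2 with
        | [], h2 => simp [insertAfter] at h2
        | d :: t₀, h2 =>
          by_cases hd : d = q
          · rw [insertAfter_cons_eq t₀ hd] at h2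
            simp only [List.cons.injEq] at h2
            exact Or.inr (Or.inr ⟨[], t₀, by simp [h.1, h2.1]⟩)
          · rw [insertAfter_cons_ne t₀ hd] at h2
            simp only [List.cons.injEq] at h2
            exact Or.inr (Or.inr ⟨[], t₀, by simp [h.1, h2.1]⟩)
      | d :: u₂, h =>
        simp only [List.cons_append, List.cons.injEq] at h
        rcases ih h.2 with h' | ⟨hax, u', v', hM⟩ | ⟨u', v', hM⟩
        · exact Or.inl h'
        · exact Or.inr (Or.inl ⟨hax, c :: u', v', by rw [hM]; simp⟩)
        · exact Or.inr (Or.inr ⟨c :: u', v', by rw [hM]; simp⟩)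

lemma le_of_mem_buildL {p : ℕ → ℕ} : ∀ {k x : ℕ}, x ∈ buildL p k → x ≤ k := by
  intro k
  induction k with
  | zero => intro x h; simp [buildL] at h; omega
  | succ i ih =>
    intro x h
    rcases mem_of_mem_insertAfter h with h | h
    · omega
    · exact Nat.le_succ_of_le (ih h)

lemma mem_buildL_of_le {p : ℕ → ℕ} :
    ∀ {k : ℕ}, (∀ i, 1 ≤ i → i ≤ k → p i < i) → ∀ {x : ℕ}, x ≤ k → x ∈ buildL p k := by
  intro k
  induction k with
  | zero => intro _ x hx; interval_cases x; simp [buildL]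
  | succ i ih =>
    intro hp x hx
    have hp' : ∀ j, 1 ≤ j → j ≤ i → p j < j := fun j h1 h2 => hp j h1 (Nat.le_succ_of_le h2)
    rcases Nat.lt_or_ge x (i + 1) with h | h
    · exact (sublist_insertAfter _ _ _).subset (ih hp' (by omega))
    · have hx1 : x = i + 1 := by omega
      subst hx1
      have hq : p (i + 1) ∈ buildL p i := ih hp' (by have := hp (i+1) (by omega) le_rfl; omega)
      exact mem_insertAfter_self hq

lemma nodup_buildL {p : ℕ → ℕ} : ∀ {k : ℕ}, (buildL p k).Nodup := by
  intro k
  induction k with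
  | zero => simp [buildL]
  | succ i ih =>
    exact nodup_insertAfter ih (fun h => by have := le_of_mem_buildL h; omega)

lemma parent_before {p : ℕ → ℕ} :
    ∀ {k : ℕ}, (∀ i, 1 ≤ i → i ≤ k → p i < i) → ∀ {j : ℕ}, 1 ≤ j → j ≤ k →
      [p j, j] <+ buildL p k := by
  intro k
  induction k with
  | zero => intro _ j h1 h2; omega
  | succ i ih =>
    intro hp j h1 h2
    have hp' : ∀ j, 1 ≤ j → j ≤ i → p j < j := fun j a b => hp j a (Nat.le_succ_of_le b)
    rcases Nat.lt_or_ge j (i + 1) with h | h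
    · exact ((ih hp' h1 (by omega)).trans (sublist_insertAfter _ _ _))
    · have hj : j = i + 1 := by omega
      subst hj
      have hq : p (i+1) ∈ buildL p i :=
        mem_buildL_of_le hp' (by have := hp (i+1) (by omega) le_rfl; omega)
      rcases List.append_of_mem hq with ⟨s, t, hst⟩
      have hns : p (i+1) ∉ s := by
        have hnd := nodup_buildL (p := p) (k := i)
        rw [hst] at hnd
        intro hmem
        exact (List.nodup_append'.mp hnd).2.2 hmem (List.mem_cons_self)
      show [p (i+1), i+1] <+ insertAfter (p (i+1)) (i+1) (buildL p i)
      rw [hst, insertAfter_split hns]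
      exact (((List.nil_sublist t).cons₂ _).cons₂ _).trans (List.sublist_append_right s _)

lemma main_lemma {p : ℕ → ℕ} :
    ∀ {k : ℕ}, (∀ i, 1 ≤ i → i ≤ k → p i < i) → ∀ {a b : ℕ} {u v : List ℕ}, 1 ≤ b →
      buildL p k = u ++ a :: b :: v →
      (a < b → isAncestor p a b) ∧ (b < a → [p b, a] <+ buildL p k) := by
  intro k
  induction k with
  | zero =>
    intro _ a b u v _ h
    exact absurd (congrArg List.length h) (by simp [buildL]; omega)
  | succ i ih =>
    intro hp a b u v hb h
    have hp' : ∀ j, 1 ≤ j → j ≤ i → p j < j := fun j h1 h2 => hp j h1 (Nat.le_succ_of_le h2)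
    have hpi : p (i+1) < i + 1 := hp (i+1) (by omega) le_rfl
    have h' : insertAfter (p (i+1)) (i+1) (buildL p i) = u ++ a :: b :: v := h
    rcases insertAfter_adj h' with ⟨ha, hb'⟩ | ⟨ha, u', v', hM⟩ | ⟨u', v', hM⟩
    · -- a = p (i+1), b = i+1
      subst ha; subst hb'
      constructor
      · intro _
        exact ⟨1, by simp⟩
      · intro hba; omega
    · -- a = i+1, buildL p i = u' ++ p (i+1) :: b :: v'
      subst ha
      have hbmem : b ∈ buildL p i := by rw [hM]; simp
      have hble : b ≤ i := le_of_mem_buildL hbmem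
      have hnd : (u' ++ p (i+1) :: b :: v').Nodup := by rw [← hM]; exact nodup_buildL
      rcases List.nodup_append'.mp hnd with ⟨hnu, hnr, hdisj⟩
      have hqu : p (i+1) ∉ u' := fun hm => hdisj hm (List.mem_cons_self)
      have hbu : b ∉ u' := fun hm => hdisj hm (by simp)
      have hbq : b ≠ p (i+1) := by
        rcases List.nodup_cons.mp hnr with ⟨hq1, _⟩
        exact fun e => hq1 (by simp [e])
      have hbv : b ∉ v' := by
        rcases List.nodup_cons.mp hnr with ⟨_, hr2⟩
        exact (List.nodup_cons.mp hr2).1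
      have hLk1 : buildL p (i+1) = (u' ++ [p (i+1)]) ++ (i+1) :: b :: v' := by
        show insertAfter (p (i+1)) (i+1) (buildL p i) = _
        rw [hM, insertAfter_split hqu]; simp
      constructor
      · intro hab; omega
      · intro _
        have hpbb : [p b, b] <+ (u' ++ [p (i+1)]) ++ b :: v' := by
          have := parent_before hp' hb (by omega)
          rw [hM] at this
          simpa using this
        have hpb_mem : p b ∈ u' ++ [p (i+1)] :=
          mem_of_pair_sublist hpbb (by simp [hbu, hbq]) hbv
        rw [hLk1]
        exact pair_sublist_of_mem hpb_mem
    · -- pair already present in buildL p i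
      rcases ih hp' hb hM with ⟨h1, h2⟩
      refine ⟨h1, fun hba => ?_⟩
      exact (h2 hba).trans (sublist_insertAfter _ _ _)

/-- Adjacency–timestamp dichotomy: if `b` (with `b ≥ 1`) immediately follows
`a` in `L k`, then exactly one of: `b > a` and `a` is an ancestor of `b`; or
`b < a` (so `b` was inserted before `a`) and the parent `p b` of `b` occurs
strictly before `a` in `L k`. -/
theorem adjacency_dichotomy
    (k : ℕ) (p : ℕ → ℕ) (hp : ∀ i, 1 ≤ i → i ≤ k → p i < i)
    (a b : ℕ) (hb : 1 ≤ b)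
    (u v : List ℕ) (hL : buildL p k = u ++ a :: b :: v) :
    Xor' (a < b ∧ isAncestor p a b)
      (b < a ∧ (buildL p k).idxOf (p b) < (buildL p k).idxOf a) := by
  have hnd : (buildL p k).Nodup := nodup_buildL
  have hab_sub : [a, b] <+ buildL p k := by
    rw [hL]
    exact (((List.nil_sublist v).cons₂ b).cons₂ a).trans (List.sublist_append_right u _)
  have hne : a ≠ b := by
    have := hab_sub.nodup hnd
    simp at this; exact this
  rcases main_lemma hp hb hL with ⟨h1, h2⟩
  rcases Nat.lt_trichotomy a b with h | h | h
  · left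
    exact ⟨⟨h, h1 h⟩, fun hq => by omega⟩
  · exact absurd h hne
  · right
    refine ⟨⟨h, indexOf_lt_of_pair_sublist hnd (h2 h)⟩, fun hq => by
      have := hq.1; omega⟩
end

section
/- Same-parent insertion ordering (paper's Lemma on concurrent InsertAfter at the same node): Suppose i, j ∈ {1, …, k} with i < j and p i = p j = a, i.e., both i and j were inserted directly at the same parent a, with i inserted first (hence i has the lower timestamp). Then in the final list L k the element j occurs strictly between a and i; in particular the node inserted first lies farther away from the common parent, and the node inserted later, which has the higher timestamp, lies closer to it. -/
lemma mem_insertAfter {a : ℕ} (x : ℕ) {M : List ℕ} (ha : a ∈ M) (y : ℕ) :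
    y ∈ insertAfter a x M ↔ y = x ∨ y ∈ M := by
  induction M with
  | nil => simp at ha
  | cons c t ih =>
    by_cases hc : c = a
    · simp [insertAfter, hc]; tauto
    · rcases List.mem_cons.1 ha with h | h
      · exact absurd h.symm hc
      · simp [insertAfter, hc, ih h]; tauto

lemma idx_insertAfter_x {a x : ℕ} {M : List ℕ} (ha : a ∈ M) (hx : x ∉ M) :
    (insertAfter a x M).idxOf x = M.idxOf a + 1 := by
  induction M with
  | nil => simp at ha
  | cons c t ih =>
    have hcx : c ≠ x := fun h => hx (h ▸ List.mem_cons_self)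
    by_cases hc : c = a
    · have hax : a ≠ x := fun h => hcx (hc.trans h)
      simp [insertAfter, hc, List.idxOf_cons_ne _ hax, List.idxOf_cons_self]
    · have hat : a ∈ t := by
        rcases List.mem_cons.1 ha with h | h
        · exact absurd h.symm hc
        · exact h
      have hxt : x ∉ t := fun h => hx (List.mem_cons_of_mem c h)
      simp [insertAfter, hc, List.idxOf_cons_ne _ hcx,
        List.idxOf_cons_ne _ hc, ih hat hxt]

lemma idx_insertAfter_le {a b x : ℕ} {M : List ℕ} (ha : a ∈ M) (hb : b ∈ M)
    (h : M.idxOf b ≤ M.idxOf a) :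
    (insertAfter a x M).idxOf b = M.idxOf b := by
  induction M with
  | nil => simp at ha
  | cons c t ih =>
    by_cases hcb : c = b
    · by_cases hc : c = a
      · simp [insertAfter, hc, List.idxOf_cons_eq _ hcb,
          List.idxOf_cons_eq _ ((hc.symm.trans hcb) : a = b)]
      · simp [insertAfter, hc, List.idxOf_cons_eq _ hcb]
    · have hbt : b ∈ t := by
        rcases List.mem_cons.1 hb with h' | h'
        · exact absurd h'.symm hcb
        · exact h'
      by_cases hc : c = a
      · rw [List.idxOf_cons_eq _ hc, List.idxOf_cons_ne _ hcb] at h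
        omega
      · have hat : a ∈ t := by
          rcases List.mem_cons.1 ha with h' | h'
          · exact absurd h'.symm hc
          · exact h'
        rw [List.idxOf_cons_ne _ hcb, List.idxOf_cons_ne _ hc] at h
        simp [insertAfter, hc, List.idxOf_cons_ne _ hcb,
          ih hat hbt (by omega)]

lemma idx_insertAfter_gt {a b x : ℕ} {M : List ℕ} (ha : a ∈ M) (hb : b ∈ M) (hx : x ∉ M)
    (h : M.idxOf a < M.idxOf b) :
    (insertAfter a x M).idxOf b = M.idxOf b + 1 := by
  induction M with
  | nil => simp at ha
  | cons c t ih =>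
    have hcb : c ≠ b := by
      intro h'
      rw [List.idxOf_cons_eq _ h'] at h; omega
    have hbt : b ∈ t := by
      rcases List.mem_cons.1 hb with h' | h'
      · exact absurd h'.symm hcb
      · exact h'
    have hxb : x ≠ b := fun h' => hx (h' ▸ hb)
    by_cases hc : c = a
    · simp [insertAfter, hc, List.idxOf_cons_ne _ hcb,
        List.idxOf_cons_ne _ (fun h' : a = b => hcb (hc.trans h')),
        List.idxOf_cons_ne _ hxb]
    · have hat : a ∈ t := by
        rcases List.mem_cons.1 ha with h' | h'
        · exact absurd h'.symm hc
        · exact h'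
      have hxt : x ∉ t := fun h' => hx (List.mem_cons_of_mem c h')
      rw [List.idxOf_cons_ne _ hcb, List.idxOf_cons_ne _ hc] at h
      simp [insertAfter, hc, List.idxOf_cons_ne _ hcb,
        ih hat hbt hxt (by omega)]

lemma idx_lt_insertAfter {a b c x : ℕ} {M : List ℕ} (ha : a ∈ M) (hb : b ∈ M)
    (hc : c ∈ M) (hx : x ∉ M) (h : M.idxOf a < M.idxOf b) :
    (insertAfter c x M).idxOf a < (insertAfter c x M).idxOf b := by
  rcases le_or_gt (M.idxOf b) (M.idxOf c) with h1 | h1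
  · rw [idx_insertAfter_le hc hb h1, idx_insertAfter_le hc ha (by omega)]
    exact h
  · rw [idx_insertAfter_gt hc hb hx h1]
    rcases le_or_gt (M.idxOf a) (M.idxOf c) with h2 | h2
    · rw [idx_insertAfter_le hc ha h2]; omega
    · rw [idx_insertAfter_gt hc ha hx h2]; omega

lemma mem_buildL {p : ℕ → ℕ} {n : ℕ} (hp : ∀ i, 1 ≤ i → i ≤ n → p i < i) :
    ∀ y, y ∈ buildL p n ↔ y ≤ n := by
  induction n with
  | zero => intro y; simp [buildL, Nat.le_zero]
  | succ m ih =>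
    intro y
    have hp' : ∀ i, 1 ≤ i → i ≤ m → p i < i := fun i h1 h2 => hp i h1 (by omega)
    have hpm : p (m + 1) ∈ buildL p m :=
      (ih hp' (p (m + 1))).2 (by have := hp (m + 1) (by omega) le_rfl; omega)
    rw [show buildL p (m + 1) = insertAfter (p (m + 1)) (m + 1) (buildL p m) from by
        rw [buildL],
      mem_insertAfter _ hpm, ih hp' y]
    omega

lemma order_mono {p : ℕ → ℕ} {k a b m : ℕ} (hp : ∀ i, 1 ≤ i → i ≤ k → p i < i)
    {n : ℕ} (hmn : m ≤ n) (hnk : n ≤ k) (ha : a ≤ m) (hb : b ≤ m)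
    (h : (buildL p m).idxOf a < (buildL p m).idxOf b) :
    (buildL p n).idxOf a < (buildL p n).idxOf b := by
  induction n, hmn using Nat.le_induction with
  | base => exact h
  | succ n hmn ih =>
    have hp' : ∀ i, 1 ≤ i → i ≤ n → p i < i := fun i h1 h2 => hp i h1 (by omega)
    have hmem := mem_buildL (p := p) hp'
    have hprev := ih (by omega)
    rw [show buildL p (n + 1) = insertAfter (p (n + 1)) (n + 1) (buildL p n) from by
        rw [buildL]]
    exact idx_lt_insertAfter ((hmem a).2 (by omega)) ((hmem b).2 (by omega))
      ((hmem (p (n + 1))).2 (by have := hp (n + 1) (by omega) (by omega); omega))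
      (fun hx => by have := (hmem (n + 1)).1 hx; omega) hprev

/-- Same-parent insertion ordering: if `i < j` were both inserted at the same
parent `p i = p j`, then in the final list `L k` the later (higher-timestamp)
node `j` occurs strictly between the common parent and `i`. -/
theorem same_parent_order
    (k : ℕ) (p : ℕ → ℕ) (hp : ∀ i, 1 ≤ i → i ≤ k → p i < i)
    (i j : ℕ) (hi : 1 ≤ i) (hij : i < j) (hj : j ≤ k) (hpar : p i = p j) :
    (buildL p k).idxOf (p i) < (buildL p k).idxOf j ∧
      (buildL p k).idxOf j < (buildL p k).idxOf i := by
  obtain ⟨m, rfl⟩ : ∃ m, i = m + 1 := ⟨i - 1, by omega⟩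
  obtain ⟨r, rfl⟩ : ∃ r, j = r + 1 := ⟨j - 1, by omega⟩
  set a := p (m + 1) with ha_def
  have hik : m + 1 ≤ k := by omega
  have ha_lt : a < m + 1 := hp (m + 1) (by omega) hik
  have hpm : ∀ x, 1 ≤ x → x ≤ m → p x < x := fun x h1 h2 => hp x h1 (by omega)
  have hmemm := mem_buildL (p := p) hpm
  have haM : a ∈ buildL p m := (hmemm a).2 (by omega)
  have hiM : (m + 1) ∉ buildL p m := fun hx => by have := (hmemm (m + 1)).1 hx; omega
  have h1 : (buildL p (m + 1)).idxOf a < (buildL p (m + 1)).idxOf (m + 1) := by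
    rw [show buildL p (m + 1) = insertAfter a (m + 1) (buildL p m) from by rw [buildL],
      idx_insertAfter_x haM hiM, idx_insertAfter_le haM haM le_rfl]
    omega
  have h2 : (buildL p r).idxOf a < (buildL p r).idxOf (m + 1) :=
    order_mono hp (by omega) (by omega) (by omega) (by omega) h1
  have hpr : ∀ x, 1 ≤ x → x ≤ r → p x < x := fun x h1 h2 => hp x h1 (by omega)
  have hmemr := mem_buildL (p := p) hpr
  have haR : a ∈ buildL p r := (hmemr a).2 (by omega)
  have hiR : (m + 1) ∈ buildL p r := (hmemr (m + 1)).2 (by omega)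
  have hjR : (r + 1) ∉ buildL p r := fun hx => by have := (hmemr (r + 1)).1 hx; omega
  have hbuild : buildL p (r + 1) = insertAfter a (r + 1) (buildL p r) := by
    rw [buildL, ← hpar]
  have h3 : (buildL p (r + 1)).idxOf a < (buildL p (r + 1)).idxOf (r + 1) := by
    rw [hbuild, idx_insertAfter_x haR hjR, idx_insertAfter_le haR haR le_rfl]
    omega
  have h4 : (buildL p (r + 1)).idxOf (r + 1) < (buildL p (r + 1)).idxOf (m + 1) := by
    rw [hbuild, idx_insertAfter_x haR hjR, idx_insertAfter_gt haR hiR hjR h2]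
    omega
  exact ⟨order_mono hp (by omega) le_rfl (by omega) (by omega) h3,
    order_mono hp (by omega) le_rfl (by omega) (by omega) h4⟩
end

section
/- Replay placement when the successor has a larger timestamp (paper's Lemma: 'if A→B with A.ts < B.ts, then ReplicateInsertAfter(A,C) must scan from A for the first node D with D.ts < C.ts and insert C just before D'): Let S ⊆ {1, …, k} be parent-closed, let a ∈ S ∪ {0}, let x ∈ {1, …, k} with x ∉ S and p x = a, and suppose the element immediately following a in build S is greater than a. Write the portion of build S strictly after a as v, and let v₁ be the longest prefix of v all of whose entries are greater than x. Then in build (S ∪ {x}) the element x occurs immediately after the block a :: v₁: if v₁ ≠ v, x is immediately before the first element of v that is smaller than x, and otherwise x is the last element of the list. -/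
lemma insertByTS_eq (x : ℕ) : ∀ l : List ℕ,
    insertByTS x l =
      l.takeWhile (fun b => decide (x < b)) ++ x :: l.dropWhile (fun b => decide (x < b))
  | [] => rfl
  | b :: t => by
    by_cases h : x < b
    · simp [insertByTS, h, List.takeWhile_cons, List.dropWhile_cons, insertByTS_eq x t]
    · simp [insertByTS, h, List.takeWhile_cons, List.dropWhile_cons]

lemma insertByTS_insertAfter (x q m : ℕ) (hqx : q ≠ x) (hxm : x < m) :
    ∀ l : List ℕ, insertByTS x (insertAfter q m l) = insertAfter q m (insertByTS x l)
  | [] => by simp [insertAfter, insertByTS, Ne.symm hqx]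
  | b :: t => by
    by_cases hbq : b = q
    · subst hbq
      by_cases hxb : x < b
      · simp [insertAfter, insertByTS, hxb, hxm]
      · simp [insertAfter, insertByTS, hxb, Ne.symm hqx]
    · by_cases hxb : x < b
      · simp [insertAfter, insertByTS, hxb, hbq, insertByTS_insertAfter x q m hqx hxm t]
      · simp [insertAfter, insertByTS, hxb, hbq, Ne.symm hqx]

lemma replayInsert_insertAfter (a x q m : ℕ) (ham : a ≠ m) (hqx : q ≠ x) (hxm : x < m) :
    ∀ l : List ℕ, replayInsert a x (insertAfter q m l) = insertAfter q m (replayInsert a x l)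
  | [] => by simp [insertAfter, replayInsert]
  | b :: t => by
    by_cases hbq : b = q
    · subst hbq
      by_cases hba : b = a
      · subst hba
        simp [insertAfter, replayInsert, insertByTS, hxm]
      · simp [insertAfter, replayInsert, hba, Ne.symm ham]
    · by_cases hba : b = a
      · subst hba
        simp [insertAfter, replayInsert, hbq, insertByTS_insertAfter x q m hqx hxm t]
      · simp [insertAfter, replayInsert, hbq, hba,
          replayInsert_insertAfter a x q m ham hqx hxm t]

lemma replayInsert_of_all_small (a x : ℕ) :
    ∀ l : List ℕ, (∀ b ∈ l, ¬ x < b) → replayInsert a x l = insertAfter a x l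
  | [], _ => rfl
  | b :: t, h => by
    by_cases hba : b = a
    · subst hba
      have ht : insertByTS x t = x :: t := by
        cases t with
        | nil => rfl
        | cons c t' => simp [insertByTS, h c (by simp)]
      simp [replayInsert, insertAfter, ht]
    · simp [replayInsert, insertAfter, hba,
        replayInsert_of_all_small a x t (fun b hb => h b (List.mem_cons_of_mem _ hb))]

lemma replayInsert_split (a x : ℕ) :
    ∀ (u w : List ℕ), a ∉ u → replayInsert a x (u ++ a :: w) = u ++ a :: insertByTS x w
  | [], w, _ => by simp [replayInsert]
  | b :: u, w, h => by
    have hba : b ≠ a := fun hh => h (hh ▸ List.mem_cons_self)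
    have := replayInsert_split a x u w (fun hm => h (List.mem_cons_of_mem _ hm))
    simp only [List.cons_append, replayInsert, if_neg hba]
    simpa using this

lemma insertAfter_perm (a x : ℕ) :
    ∀ l : List ℕ, a ∈ l → List.Perm (insertAfter a x l) (x :: l)
  | b :: t, h => by
    by_cases hba : b = a
    · subst hba
      simp only [insertAfter, if_pos rfl]
      exact List.Perm.swap _ _ _
    · have ha : a ∈ t := (List.mem_cons.1 h).resolve_left (fun h' => hba h'.symm)
      simp only [insertAfter, if_neg hba]
      exact ((insertAfter_perm a x t ha).cons b).trans (List.Perm.swap _ _ _)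

lemma fold_perm (p : ℕ → ℕ) :
    ∀ (l : List ℕ), l.Pairwise (· < ·) → ∀ (M : List ℕ),
      (∀ i ∈ l, p i ∈ M ∨ (p i ∈ l ∧ p i < i)) →
      List.Perm (l.foldl (fun M i => insertAfter (p i) i M) M) (l ++ M)
  | [], _, M, _ => by simp
  | i :: t, hsort, M, h => by
    have hpi : p i ∈ M := by
      rcases h i (by simp) with h' | ⟨hmem, hlt⟩
      · exact h'
      · rcases List.mem_cons.1 hmem with h'' | h''
        · omega
        · exact absurd (List.rel_of_pairwise_cons hsort h'') (by omega)
    have hperm : List.Perm (insertAfter (p i) i M) (i :: M) := insertAfter_perm _ _ _ hpi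
    have ih := fold_perm p t hsort.of_cons (insertAfter (p i) i M) (by
      intro j hj
      rcases h j (List.mem_cons_of_mem _ hj) with h' | ⟨hmem, hlt⟩
      · exact Or.inl (hperm.mem_iff.2 (List.mem_cons_of_mem _ h'))
      · rcases List.mem_cons.1 hmem with h'' | h''
        · exact Or.inl (hperm.mem_iff.2 (h'' ▸ List.mem_cons_self))
        · exact Or.inr ⟨h'', hlt⟩)
    simpa using ih.trans ((hperm.append_left t).trans List.perm_middle)

lemma buildSet_perm (k : ℕ) (p : ℕ → ℕ) (hp : ∀ i, 1 ≤ i → i ≤ k → p i < i)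
    (S : Finset ℕ) (hS : S ⊆ Finset.Icc 1 k)
    (hclosed : ∀ i ∈ S, p i = 0 ∨ p i ∈ S) :
    List.Perm (buildSet p S) (S.sort (· ≤ ·) ++ [0]) := by
  apply fold_perm p _ (Finset.sortedLT_sort S).pairwise
  intro i hi
  have hiS : i ∈ S := (Finset.mem_sort _).1 hi
  have hik := hS hiS
  simp only [Finset.mem_Icc] at hik
  rcases hclosed i hiS with h0 | hmem
  · exact Or.inl (by simp [h0])
  · exact Or.inr ⟨(Finset.mem_sort _).2 hmem, hp i hik.1 hik.2⟩

lemma buildSet_nodup (k : ℕ) (p : ℕ → ℕ) (hp : ∀ i, 1 ≤ i → i ≤ k → p i < i)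
    (S : Finset ℕ) (hS : S ⊆ Finset.Icc 1 k)
    (hclosed : ∀ i ∈ S, p i = 0 ∨ p i ∈ S) :
    (buildSet p S).Nodup := by
  refine (buildSet_perm k p hp S hS hclosed).nodup_iff.2 ?_
  refine List.Nodup.append (Finset.sort_nodup _ _) (List.nodup_singleton 0) ?_
  intro b hb hb'
  have := hS ((Finset.mem_sort _).1 hb)
  simp only [Finset.mem_Icc] at this
  simp only [List.mem_singleton] at hb'
  omega

lemma buildSet_mem (k : ℕ) (p : ℕ → ℕ) (hp : ∀ i, 1 ≤ i → i ≤ k → p i < i)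
    (S : Finset ℕ) (hS : S ⊆ Finset.Icc 1 k)
    (hclosed : ∀ i ∈ S, p i = 0 ∨ p i ∈ S) (b : ℕ) (hb : b ∈ buildSet p S) :
    b = 0 ∨ b ∈ S := by
  have := (buildSet_perm k p hp S hS hclosed).mem_iff.1 hb
  simp only [List.mem_append, List.mem_singleton, Finset.mem_sort] at this
  tauto

lemma sort_erase_max (S : Finset ℕ) (m : ℕ) (hm : m ∈ S) (hle : ∀ b ∈ S, b ≤ m) :
    S.sort (· ≤ ·) = (S.erase m).sort (· ≤ ·) ++ [m] := by
  refine (fun hp hs₁ hs₂ => List.Perm.eq_of_pairwise' (r := (· ≤ ·)) hs₁ hs₂ hp) ?_ (Finset.pairwise_sort _ _) ?_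
  · refine List.Perm.trans ?_ (List.perm_append_singleton m _).symm
    rw [← Multiset.coe_eq_coe, ← Multiset.cons_coe, Finset.sort_eq, Finset.sort_eq,
      Finset.erase_val, Multiset.cons_erase hm]
  · refine List.pairwise_append.2 ⟨Finset.pairwise_sort _ _, List.pairwise_singleton _ _, ?_⟩
    intro a ha b hb
    simp only [List.mem_singleton] at hb
    subst hb
    exact hle a (Finset.mem_of_mem_erase ((Finset.mem_sort _).1 ha))

lemma buildSet_erase_max (p : ℕ → ℕ) (S : Finset ℕ) (m : ℕ) (hm : m ∈ S)
    (hle : ∀ b ∈ S, b ≤ m) :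
    buildSet p S = insertAfter (p m) m (buildSet p (S.erase m)) := by
  unfold buildSet
  rw [sort_erase_max S m hm hle, List.foldl_append]
  rfl

lemma buildSet_insert_base (k : ℕ) (p : ℕ → ℕ) (hp : ∀ i, 1 ≤ i → i ≤ k → p i < i)
    (S : Finset ℕ) (hS : S ⊆ Finset.Icc 1 k) (hclosed : ∀ i ∈ S, p i = 0 ∨ p i ∈ S)
    (x : ℕ) (hx : x ∈ Finset.Icc 1 k) (hxS : x ∉ S) (hall : ∀ b ∈ S, b < x) :
    buildSet p (insert x S) = replayInsert (p x) x (buildSet p S) := by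
  have hx1 : 1 ≤ x := (Finset.mem_Icc.1 hx).1
  have hlee : ∀ b ∈ insert x S, b ≤ x := by
    intro b hb
    rcases Finset.mem_insert.1 hb with rfl | hb
    · exact le_rfl
    · exact (hall b hb).le
  have h1 := buildSet_erase_max p (insert x S) x (Finset.mem_insert_self x S) hlee
  rw [Finset.erase_insert hxS] at h1
  rw [h1, replayInsert_of_all_small]
  intro b hb
  rcases buildSet_mem k p hp S hS hclosed b hb with rfl | hb'
  · omega
  · have := hall b hb'
    omega

lemma buildSet_insert_eq (k : ℕ) (p : ℕ → ℕ) (hp : ∀ i, 1 ≤ i → i ≤ k → p i < i) :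
    ∀ (n : ℕ) (S : Finset ℕ), S.card ≤ n → S ⊆ Finset.Icc 1 k →
      (∀ i ∈ S, p i = 0 ∨ p i ∈ S) → ∀ x, x ∈ Finset.Icc 1 k → x ∉ S →
      buildSet p (insert x S) = replayInsert (p x) x (buildSet p S) := by
  intro n
  induction n with
  | zero =>
    intro S hcard hS hcl x hx hxS
    have hSe : S = ∅ := Finset.card_eq_zero.1 (Nat.le_zero.1 hcard)
    subst hSe
    exact buildSet_insert_base k p hp ∅ hS hcl x hx hxS (by simp)
  | succ n ih =>
    intro S hcard hS hcl x hx hxS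
    by_cases hall : ∀ b ∈ S, b < x
    · exact buildSet_insert_base k p hp S hS hcl x hx hxS hall
    · push_neg at hall
      obtain ⟨b0, hb0S, hb0⟩ := hall
      have hne : S.Nonempty := ⟨b0, hb0S⟩
      set m := S.max' hne with hm_def
      have hmS : m ∈ S := S.max'_mem hne
      have hle : ∀ b ∈ S, b ≤ m := fun b hb => S.le_max' b hb
      have hxm : x < m :=
        lt_of_le_of_ne (le_trans hb0 (hle b0 hb0S)) (fun h => hxS (h ▸ hmS))
      have hx1 : 1 ≤ x := (Finset.mem_Icc.1 hx).1
      set S' := S.erase m with hS'_def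
      have hcard' : S'.card ≤ n := by
        rw [hS'_def, Finset.card_erase_of_mem hmS]
        have : 1 ≤ S.card := Finset.card_pos.2 hne
        omega
      have hS'sub : S' ⊆ Finset.Icc 1 k := (Finset.erase_subset m S).trans hS
      have hcl' : ∀ i ∈ S', p i = 0 ∨ p i ∈ S' := by
        intro i hi
        have hiS := Finset.mem_of_mem_erase hi
        have hik := Finset.mem_Icc.1 (hS hiS)
        rcases hcl i hiS with h0 | hmem
        · exact Or.inl h0
        · refine Or.inr (Finset.mem_erase.2 ⟨?_, hmem⟩)
          have him : i ≤ m := hle i hiS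
          have hinem : i ≠ m := (Finset.mem_erase.1 hi).1
          have := hp i hik.1 hik.2
          omega
      have hxS' : x ∉ S' := fun h => hxS (Finset.mem_of_mem_erase h)
      have hstep1 : buildSet p S = insertAfter (p m) m (buildSet p S') :=
        buildSet_erase_max p S m hmS hle
      have hlee : ∀ b ∈ insert x S, b ≤ m := by
        intro b hb
        rcases Finset.mem_insert.1 hb with rfl | hb
        · omega
        · exact hle b hb
      have hstep2 := buildSet_erase_max p (insert x S) m (Finset.mem_insert_of_mem hmS) hlee
      rw [Finset.erase_insert_of_ne (by omega : x ≠ m)] at hstep2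
      have hIH := ih S' hcard' hS'sub hcl' x hx hxS'
      have hpxm : p x ≠ m := by
        have := hp x hx1 (Finset.mem_Icc.1 hx).2
        omega
      have hpmx : p m ≠ x := by
        rcases hcl m hmS with h0 | hmem
        · omega
        · exact fun h => hxS (h ▸ hmem)
      rw [hstep2, hIH, ← replayInsert_insertAfter (p x) x (p m) m hpxm hpmx hxm, ← hstep1]

/-- Replay placement when the successor has a larger timestamp: if the element
immediately following `a` in `build S` is greater than `a`, and `v` is the
portion of `build S` strictly after `a`, then in `build (S ∪ {x})` (for `x ∉ S`
with parent `a`) the element `x` occurs immediately after the block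
`a :: v₁`, where `v₁` is the longest prefix of `v` all of whose entries exceed
`x`. -/
theorem replay_placement_larger_successor
    (k : ℕ) (p : ℕ → ℕ) (hp : ∀ i, 1 ≤ i → i ≤ k → p i < i)
    (S : Finset ℕ) (hS : S ⊆ Finset.Icc 1 k)
    (hclosed : ∀ i ∈ S, p i = 0 ∨ p i ∈ S)
    (a : ℕ) (ha : a = 0 ∨ a ∈ S)
    (x : ℕ) (hx : x ∈ Finset.Icc 1 k) (hxS : x ∉ S) (hpx : p x = a)
    (u : List ℕ) (c : ℕ) (v' : List ℕ)
    (hsplit : buildSet p S = u ++ a :: c :: v') (hac : a < c) :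
    buildSet p (insert x S) =
      u ++ a :: (c :: v').takeWhile (fun b => decide (x < b)) ++
        x :: (c :: v').dropWhile (fun b => decide (x < b)) := by
  have hmain := buildSet_insert_eq k p hp S.card S le_rfl hS hclosed x hx hxS
  rw [hpx] at hmain
  have hnodup := buildSet_nodup k p hp S hS hclosed
  rw [hsplit] at hnodup
  have haU : a ∉ u := fun h =>
    (List.nodup_append.1 hnodup).2.2 a h a List.mem_cons_self rfl
  rw [hmain, hsplit, replayInsert_split a x u (c :: v') haU, insertByTS_eq]
  simp [List.append_assoc]
end
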